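/- arXiv:2402.19174 — 3 statements merged into one kernel-verified Lean document; each statement's English description precedes it below -/
import Mathlib

section
/- Fix a Littlewood–Richardson filling of the skew shape λ/λ₁ of content λ₂, where λ₁ has at most d columns. Define ψ on cells of λ/λ₁ by ψ(r,s) = (i, d+j) if cell (r,s) contains the j-th occurrence (from the left) of the entry i. Then ψ is a bijection from the cells of λ/λ₁ to the cells of the skew shape ν/d^{ℓ(λ₂)} where ν = d^{ℓ(λ₂)} ++ λ₂, and for every cell (r,s) of λ/λ₁ one has s − r ≤ (d+j) − i. -/
noncomputable section
attribute [local instance] Classical.propDecidable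

/-- A Littlewood–Richardson filling of the skew shape `lam / lam1` of content `lam2`:
a semistandard filling (entries ≥ 1, weakly increasing along rows, strictly increasing
down columns) whose number of entries equal to `i` is the `i`-th part of `lam2`, and
whose reverse reading word (rows read right to left, top to bottom) is a lattice word.
Cells are 0-indexed. -/
def IsLRFilling (lam lam1 lam2 : YoungDiagram) (F : ℕ × ℕ → ℕ) : Prop :=
  lam1.cells ⊆ lam.cells ∧
  (∀ c ∈ lam.cells \ lam1.cells, 1 ≤ F c) ∧
  (∀ r s₁ s₂, (r, s₁) ∈ lam.cells \ lam1.cells → (r, s₂) ∈ lam.cells \ lam1.cells →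
      s₁ ≤ s₂ → F (r, s₁) ≤ F (r, s₂)) ∧
  (∀ r₁ r₂ s, (r₁, s) ∈ lam.cells \ lam1.cells → (r₂, s) ∈ lam.cells \ lam1.cells →
      r₁ < r₂ → F (r₁, s) < F (r₂, s)) ∧
  (∀ i, 1 ≤ i →
      ((lam.cells \ lam1.cells).filter (fun c => F c = i)).card = lam2.rowLen (i - 1)) ∧
  (∀ r s i, 1 ≤ i →
      ((lam.cells \ lam1.cells).filter
          (fun c => (c.1 < r ∨ (c.1 = r ∧ s ≤ c.2)) ∧ F c = i + 1)).card ≤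
      ((lam.cells \ lam1.cells).filter
          (fun c => (c.1 < r ∨ (c.1 = r ∧ s ≤ c.2)) ∧ F c = i)).card)

/-- For a cell `c` of the skew shape carrying entry `i = F c`, the rank `j` of its
occurrence of `i` from the left (occurrences of a given entry lie in distinct columns). -/
def occRank (lam lam1 : YoungDiagram) (F : ℕ × ℕ → ℕ) (c : ℕ × ℕ) : ℕ :=
  ((lam.cells \ lam1.cells).filter (fun c' => F c' = F c ∧ c'.2 ≤ c.2)).card

/-- The map ψ of STATEMENT 6 (0-indexed): a cell containing the `j`-th occurrence of
entry `i` is sent to the cell `(i, d+j)` (1-indexed), i.e. `(i-1, d+j-1)` (0-indexed). -/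
def psiMap (lam lam1 : YoungDiagram) (F : ℕ × ℕ → ℕ) (d : ℕ) (c : ℕ × ℕ) : ℕ × ℕ :=
  (F c - 1, d + occRank lam lam1 F c - 1)

/-- fix an LR filling `F` of `lam / lam1` of content `lam2`, where `lam1`
has at most `d` columns.  Then `ψ` is a bijection from the cells of `lam / lam1` onto
the cells of the skew shape `ν / d^{ℓ(lam2)}` where `ν = d^{ℓ(lam2)} ++ lam2` (these
cells being exactly `{(r, d+s) : (r,s) ∈ lam2}`), and for every cell `c = (r,s)` of
`lam / lam1`, the content satisfies `s − r ≤ (d+j) − i`, i.e. content of `c` is at most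
content of `ψ c`. -/
theorem stmt6 (lam1 lam2 lam : YoungDiagram) (d : ℕ)
    (hd : lam1.rowLen 0 ≤ d)
    (F : ℕ × ℕ → ℕ) (hF : IsLRFilling lam lam1 lam2 F) :
    (lam.cells \ lam1.cells).image (psiMap lam lam1 F d) =
      lam2.cells.image (fun c => (c.1, d + c.2)) ∧
    Set.InjOn (psiMap lam lam1 F d) ↑(lam.cells \ lam1.cells) ∧
    ∀ c ∈ lam.cells \ lam1.cells,
      ((c.2 : ℤ) - (c.1 : ℤ)) ≤
        (((psiMap lam lam1 F d c).2 : ℤ) - ((psiMap lam lam1 F d c).1 : ℤ)) := by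
  obtain ⟨hsub, hpos, hrow, hcol, hcontent, hlattice⟩ := hF
  -- basic membership facts
  have hmemlam : ∀ c : ℕ × ℕ, c ∈ lam.cells \ lam1.cells → c ∈ lam := by
    intro c hc
    rw [Finset.mem_sdiff, YoungDiagram.mem_cells] at hc
    exact hc.1
  have hmemS : ∀ r s : ℕ, (r, s) ∈ lam → d ≤ s → (r, s) ∈ lam.cells \ lam1.cells := by
    intro r s hl hds
    rw [Finset.mem_sdiff]
    refine ⟨by rwa [YoungDiagram.mem_cells], ?_⟩
    intro h1
    rw [YoungDiagram.mem_cells, YoungDiagram.mem_iff_lt_rowLen] at h1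
    have := lam1.rowLen_anti 0 r (Nat.zero_le r)
    omega
  -- key lemma: entries in row r are at most r+1
  have hkey : ∀ i : ℕ, ∀ c ∈ lam.cells \ lam1.cells, F c = i → i ≤ c.1 + 1 := by
    intro i
    induction i using Nat.strong_induction_on with
    | _ i ih =>
      rintro ⟨r, s⟩ hc hFc
      rcases Nat.lt_or_ge i 2 with h2 | h2
      · omega
      · have hl := hlattice r s (i - 1) (by omega)
        have hone : i - 1 + 1 = i := by omega
        rw [hone] at hl
        have hcard : 0 < ((lam.cells \ lam1.cells).filter
            (fun c => (c.1 < r ∨ (c.1 = r ∧ s ≤ c.2)) ∧ F c = i)).card :=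
          Finset.card_pos.mpr ⟨(r, s), Finset.mem_filter.mpr ⟨hc, Or.inr ⟨rfl, le_rfl⟩, hFc⟩⟩
        have hpos' : 0 < ((lam.cells \ lam1.cells).filter
            (fun c => (c.1 < r ∨ (c.1 = r ∧ s ≤ c.2)) ∧ F c = i - 1)).card :=
          lt_of_lt_of_le hcard hl
        obtain ⟨c', hc'⟩ := Finset.card_pos.mp hpos'
        rw [Finset.mem_filter] at hc'
        obtain ⟨hc'S, hreg, hFc'⟩ := hc'
        obtain ⟨r', s'⟩ := c'
        rcases hreg with hlt | ⟨heq, hle⟩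
        · have := ih (i - 1) (by omega) (r', s') hc'S hFc'
          simp only at this hlt
          omega
        · simp only at heq hle hFc'
          subst heq
          have := hrow r' s s' hc hc'S hle
          omega
  -- lower bound for entries in columns ≥ d
  have hgeRow : ∀ r s : ℕ, d ≤ s → (r, s) ∈ lam.cells \ lam1.cells → r + 1 ≤ F (r, s) := by
    intro r
    induction r with
    | zero => intro s _ h; exact hpos _ h
    | succ n ihn =>
      intro s hds hmem
      have hup : (n, s) ∈ lam.cells \ lam1.cells :=
        hmemS n s (lam.up_left_mem (Nat.le_succ n) le_rfl (hmemlam _ hmem)) hds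
      have h1 := hcol n (n + 1) s hup hmem (Nat.lt_succ_self n)
      have h2 := ihn s hds hup
      omega
  -- occRank facts
  have hocc_pos : ∀ c ∈ lam.cells \ lam1.cells, 1 ≤ occRank lam lam1 F c := by
    intro c hc
    exact Finset.card_pos.mpr ⟨c, Finset.mem_filter.mpr ⟨hc, rfl, le_rfl⟩⟩
  have hocc_le : ∀ c ∈ lam.cells \ lam1.cells,
      occRank lam lam1 F c ≤ lam2.rowLen (F c - 1) := by
    intro c hc
    rw [← hcontent (F c) (hpos c hc)]
    apply Finset.card_le_card
    intro x hx
    rw [Finset.mem_filter] at hx ⊢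
    exact ⟨hx.1, hx.2.1⟩
  have hcol_lt : ∀ c ∈ lam.cells \ lam1.cells, ∀ c' ∈ lam.cells \ lam1.cells,
      F c = F c' → c.2 < c'.2 → occRank lam lam1 F c < occRank lam lam1 F c' := by
    intro c hc c' hc' hFF hlt
    apply Finset.card_lt_card
    rw [Finset.ssubset_def]
    constructor
    · intro x hx
      rw [Finset.mem_filter] at hx ⊢
      exact ⟨hx.1, by rw [hx.2.1, hFF], by omega⟩
    · intro hsub
      have hmem : c' ∈ (lam.cells \ lam1.cells).filter
          (fun c'' => F c'' = F c' ∧ c''.2 ≤ c'.2) :=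
        Finset.mem_filter.mpr ⟨hc', rfl, le_rfl⟩
      have := hsub hmem
      rw [Finset.mem_filter] at this
      omega
  have hrank_inj : ∀ c ∈ lam.cells \ lam1.cells, ∀ c' ∈ lam.cells \ lam1.cells,
      F c = F c' → occRank lam lam1 F c = occRank lam lam1 F c' → c = c' := by
    intro c hc c' hc' hFF hocc
    have hc2 : c.2 = c'.2 := by
      rcases lt_trichotomy c.2 c'.2 with h | h | h
      · exact absurd hocc (ne_of_lt (hcol_lt c hc c' hc' hFF h))
      · exact h
      · exact absurd hocc.symm (ne_of_lt (hcol_lt c' hc' c hc hFF.symm h))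
    obtain ⟨r, s⟩ := c
    obtain ⟨r', s'⟩ := c'
    simp only at hc2
    subst hc2
    have hc1 : r = r' := by
      by_contra hne
      rcases Nat.lt_or_ge r r' with h | h
      · have := hcol r r' s hc hc' h
        omega
      · have := hcol r' r s hc' hc (by omega)
        omega
    subst hc1
    rfl
  refine ⟨?_, ?_, ?_⟩
  · -- image equality
    apply Finset.Subset.antisymm
    · intro x hx
      obtain ⟨c, hc, rfl⟩ := Finset.mem_image.mp hx
      have h1 := hpos c hc
      have h2 := hocc_pos c hc
      have h3 := hocc_le c hc
      refine Finset.mem_image.mpr ⟨(F c - 1, occRank lam lam1 F c - 1), ?_, ?_⟩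
      · rw [YoungDiagram.mem_cells, YoungDiagram.mem_iff_lt_rowLen]
        omega
      · unfold psiMap
        rw [Prod.mk.injEq]
        exact ⟨rfl, by omega⟩
    · intro x hx
      obtain ⟨⟨r, s⟩, hrs, rfl⟩ := Finset.mem_image.mp hx
      rw [YoungDiagram.mem_cells, YoungDiagram.mem_iff_lt_rowLen] at hrs
      have hcardT : ((lam.cells \ lam1.cells).filter (fun c => F c = r + 1)).card =
          lam2.rowLen r := by
        have := hcontent (r + 1) (by omega)
        simpa using this
      have hsurj := Finset.surj_on_of_inj_on_of_card_le
        (s := (lam.cells \ lam1.cells).filter (fun c => F c = r + 1))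
        (t := Finset.Icc 1 (lam2.rowLen r))
        (fun c _ => occRank lam lam1 F c)
        (by
          intro a ha
          rw [Finset.mem_filter] at ha
          rw [Finset.mem_Icc]
          have h1 := hocc_pos a ha.1
          have h2 := hocc_le a ha.1
          rw [ha.2] at h2
          simp only [Nat.add_sub_cancel] at h2
          exact ⟨h1, h2⟩)
        (by
          intro a₁ a₂ ha₁ ha₂ heq
          rw [Finset.mem_filter] at ha₁ ha₂
          exact hrank_inj a₁ ha₁.1 a₂ ha₂.1 (by rw [ha₁.2, ha₂.2]) heq)
        (by rw [hcardT, Nat.card_Icc]; omega)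
      obtain ⟨c, hcT, hco⟩ := hsurj (s + 1) (by rw [Finset.mem_Icc]; omega)
      rw [Finset.mem_filter] at hcT
      refine Finset.mem_image.mpr ⟨c, hcT.1, ?_⟩
      unfold psiMap
      rw [Prod.mk.injEq, hcT.2, ← hco]
      exact ⟨by omega, by omega⟩
  · -- injectivity
    intro c hc c' hc' heq
    rw [Finset.mem_coe] at hc hc'
    unfold psiMap at heq
    rw [Prod.mk.injEq] at heq
    have h1 := hpos c hc
    have h1' := hpos c' hc'
    have h2 := hocc_pos c hc
    have h2' := hocc_pos c' hc'
    exact hrank_inj c hc c' hc' (by omega) (by omega)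
  · -- content inequality
    rintro ⟨r, s⟩ hc
    have h1 : 1 ≤ F (r, s) := hpos _ hc
    have h2 : 1 ≤ occRank lam lam1 F (r, s) := hocc_pos _ hc
    have hkey' : F (r, s) ≤ r + 1 := hkey (F (r, s)) (r, s) hc rfl
    unfold psiMap
    simp only
    rcases Nat.lt_or_ge s d with hsd | hds
    · omega
    · -- s ≥ d : full column, and occurrences of i in every column from d to s
      have hge : r + 1 ≤ F (r, s) := hgeRow r s hds hc
      have hsubset : (Finset.Icc d s).image (fun s' => (r, s')) ⊆
          (lam.cells \ lam1.cells).filter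
            (fun c' => F c' = F (r, s) ∧ c'.2 ≤ (r, s).2) := by
        intro x hx
        obtain ⟨s', hs', rfl⟩ := Finset.mem_image.mp hx
        rw [Finset.mem_Icc] at hs'
        have hmem : (r, s') ∈ lam.cells \ lam1.cells :=
          hmemS r s' (lam.up_left_mem le_rfl hs'.2 (hmemlam _ hc)) hs'.1
        refine Finset.mem_filter.mpr ⟨hmem, ?_, hs'.2⟩
        have hle := hrow r s' s hmem hc hs'.2
        have hge' := hgeRow r s' hs'.1 hmem
        omega
      have hcard := Finset.card_le_card hsubset
      rw [Finset.card_image_of_injective _ (by intro a b h; simpa using h),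
        Nat.card_Icc] at hcard
      have hj : s + 1 - d ≤ occRank lam lam1 F (r, s) := hcard
      omega
end
end

section
/- The sum of all transpositions Σ_{(a,b)∈S_n} (a,b) acts on the Specht module S^λ, for λ a partition of n, as multiplication by the scalar C(λ) = Σ_{(r,s)∈λ} (s − r). -/
open Finset Equiv

noncomputable section
attribute [local instance] Classical.propDecidable

/-- The group algebra `ℂ[S_N]`.  All representations are over `ℂ`; a left ideal of the
group algebra is an `S_N`-representation via left multiplication. -/
abbrev GA (N : ℕ) := MonoidAlgebra ℂ (Equiv.Perm (Fin N))

/-- A permutation as an element of the group algebra. -/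
def ofP {N : ℕ} (σ : Equiv.Perm (Fin N)) : GA N :=
  MonoidAlgebra.of ℂ (Equiv.Perm (Fin N)) σ

/-- The sign of a permutation, as a complex scalar. -/
def sgnC {n : ℕ} (σ : Equiv.Perm (Fin n)) : ℂ := ((Equiv.Perm.sign σ : ℤ) : ℂ)

/-- The subgroup (as a finset) of permutations preserving the fibers of `h`
(e.g. the row or the column stabilizer of a tableau). -/
def stab {N : ℕ} (h : Fin N → ℕ) : Finset (Equiv.Perm (Fin N)) :=
  Finset.univ.filter (fun σ => ∀ x, h (σ x) = h x)

/-- The Young symmetrizer of a tableau given by its row and column functions. -/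
def youngSym {N : ℕ} (row col : Fin N → ℕ) : GA N :=
  (∑ σ ∈ stab col, sgnC σ • ofP σ) * (∑ σ ∈ stab row, ofP σ)

/-- `f` is a partition of `N`: a weakly decreasing sequence of row lengths, supported on
the first `N` values, with total sum `N`. -/
def IsPartitionN (f : ℕ → ℕ) (N : ℕ) : Prop :=
  Antitone f ∧ (∀ i, N ≤ i → f i = 0) ∧ ∑ i ∈ Finset.range N, f i = N

/-- `(row, col)` is a Young tableau of shape `f` on the letters `Fin N`: the letters
occupy exactly the cells of the Young diagram of `f`, each cell once. -/
def IsTableau {N : ℕ} (f : ℕ → ℕ) (row col : Fin N → ℕ) : Prop :=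
  Function.Injective (fun x => (row x, col x)) ∧
  ∀ r c : ℕ, (∃ x, row x = r ∧ col x = c) ↔ c < f r

/-- The Specht module `S^f`, realized as the left ideal of `ℂ[S_N]` generated by the
Young symmetrizer of a tableau of shape `f`. -/
def SpechtIdeal {N : ℕ} (row col : Fin N → ℕ) : Ideal (GA N) :=
  Ideal.span {youngSym row col}

/-- The length of the last column of the partition `f` (with at most `N` parts):
the number of parts equal to the largest part. -/
def lastColLen (f : ℕ → ℕ) (N : ℕ) : ℕ :=
  ((Finset.range N).filter (fun i => f i = f 0)).card

/-- The number of (positive) parts of `f`, i.e. the length of its first column. -/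
def numParts (f : ℕ → ℕ) (N : ℕ) : ℕ :=
  ((Finset.range N).filter (fun i => 0 < f i)).card

/-- The set of all transpositions in `S_N`. -/
def transpositions (N : ℕ) : Finset (Equiv.Perm (Fin N)) :=
  Finset.univ.filter (fun σ => σ.IsSwap)

/-! ### Auxiliary lemmas -/

section Aux

variable {N : ℕ}

lemma ofP_mul (σ τ : Equiv.Perm (Fin N)) : ofP σ * ofP τ = ofP (σ * τ) := by
  simp [ofP]

lemma mem_stab {h : Fin N → ℕ} {σ : Equiv.Perm (Fin N)} :
    σ ∈ stab h ↔ ∀ x, h (σ x) = h x := by simp [stab]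

lemma stab_mul {h : Fin N → ℕ} {σ τ : Equiv.Perm (Fin N)} (hσ : σ ∈ stab h) (hτ : τ ∈ stab h) :
    σ * τ ∈ stab h := by
  rw [mem_stab] at *
  intro x; simp [Equiv.Perm.mul_apply, hσ, hτ]

lemma stab_inv {h : Fin N → ℕ} {σ : Equiv.Perm (Fin N)} (hσ : σ ∈ stab h) : σ⁻¹ ∈ stab h := by
  rw [mem_stab] at *
  intro x
  have := hσ (σ⁻¹ x)
  simpa using this.symm

lemma sgnC_mul (σ τ : Equiv.Perm (Fin N)) : sgnC (σ * τ) = sgnC σ * sgnC τ := by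
  simp [sgnC]

lemma sgnC_sq (σ : Equiv.Perm (Fin N)) : sgnC σ * sgnC σ = 1 := by
  rcases Int.units_eq_one_or (Equiv.Perm.sign σ) with h | h <;> simp [sgnC, h]

lemma mul_symA {row : Fin N → ℕ} {s : Equiv.Perm (Fin N)} (hs : s ∈ stab row) :
    ofP s * (∑ σ ∈ stab row, ofP σ) = ∑ σ ∈ stab row, ofP σ := by
  rw [Finset.mul_sum]
  simp_rw [ofP_mul]
  exact Finset.sum_nbij' (fun σ => s * σ) (fun σ => s⁻¹ * σ)
    (fun σ hσ => stab_mul hs hσ) (fun σ hσ => stab_mul (stab_inv hs) hσ)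
    (by intro σ _; group) (by intro σ _; group) (fun _ _ => rfl)

lemma symB_mul {col : Fin N → ℕ} {t : Equiv.Perm (Fin N)} (ht : t ∈ stab col) :
    (∑ σ ∈ stab col, sgnC σ • ofP σ) * ofP t = sgnC t • ∑ σ ∈ stab col, sgnC σ • ofP σ := by
  rw [Finset.sum_mul, Finset.smul_sum]
  have : ∀ σ, (sgnC σ • ofP σ) * ofP t = sgnC σ • ofP (σ * t) := by
    intro σ; rw [smul_mul_assoc, ofP_mul]
  simp_rw [this]
  refine Finset.sum_nbij' (fun σ => σ * t) (fun σ => σ * t⁻¹)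
    (fun σ hσ => stab_mul hσ ht) (fun σ hσ => stab_mul hσ (stab_inv ht))
    (by intro σ _; group) (by intro σ _; group) ?_
  intro σ hσ
  rw [smul_smul]
  congr 1
  rw [sgnC_mul, mul_comm (sgnC t), mul_assoc, sgnC_sq, mul_one]

lemma mem_transpositions {σ : Equiv.Perm (Fin N)} : σ ∈ transpositions N ↔ σ.IsSwap := by
  simp [transpositions]

lemma T_conj (π : Equiv.Perm (Fin N)) :
    ofP π * (∑ σ ∈ transpositions N, ofP σ) = (∑ σ ∈ transpositions N, ofP σ) * ofP π := by
  rw [Finset.mul_sum, Finset.sum_mul]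
  simp_rw [ofP_mul]
  refine Finset.sum_nbij' (fun σ => π * σ * π⁻¹) (fun σ => π⁻¹ * σ * π) ?_ ?_
    (by intro σ _; group) (by intro σ _; group) ?_
  · intro σ hσ
    rw [mem_transpositions] at *
    obtain ⟨a, b, hab, rfl⟩ := hσ
    exact ⟨π a, π b, by simp [hab], (Equiv.swap_apply_apply π a b).symm⟩
  · intro σ hσ
    rw [mem_transpositions] at *
    obtain ⟨a, b, hab, rfl⟩ := hσ
    refine ⟨π⁻¹ a, π⁻¹ b, by simp [hab], ?_⟩
    have := (Equiv.swap_apply_apply π⁻¹ a b).symm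
    simpa using this
  · intro σ _; congr 1; group

lemma T_central (y : GA N) :
    (∑ σ ∈ transpositions N, ofP σ) * y = y * (∑ σ ∈ transpositions N, ofP σ) := by
  induction y using MonoidAlgebra.induction_on with
  | of g => exact (T_conj g).symm
  | add f g hf hg => rw [mul_add, add_mul, hf, hg]
  | smul r f hf => rw [mul_smul_comm, smul_mul_assoc, hf]

lemma swap_mem_stab {h : Fin N → ℕ} {z y : Fin N} (hzy : h z = h y) :
    Equiv.swap z y ∈ stab h := by
  rw [mem_stab]
  intro x
  rcases eq_or_ne x z with rfl | hxz
  · rw [Equiv.swap_apply_left]; exact hzy.symm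
  rcases eq_or_ne x y with rfl | hxy
  · rw [Equiv.swap_apply_right]; exact hzy
  · rw [Equiv.swap_apply_of_ne_of_ne hxz hxy]

lemma sgnC_swap {x y : Fin N} (h : x ≠ y) : sgnC (Equiv.swap x y) = -1 := by
  simp [sgnC, Equiv.Perm.sign_swap h]

/-- Core cancellation: if `t` is a column transposition and `τ t τ` is in the row
stabilizer, with `τ` an involution, then `b * τ * a = 0`. -/
lemma sandwich_zero {row col : Fin N → ℕ} {t τ : Equiv.Perm (Fin N)}
    (htc : t ∈ stab col) (hts : sgnC t = -1) (hττ : τ * τ = 1) (htt : t * t = 1)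
    (hs : τ * t * τ ∈ stab row) :
    (∑ σ ∈ stab col, sgnC σ • ofP σ) * ofP τ * (∑ σ ∈ stab row, ofP σ) = 0 := by
  set b := ∑ σ ∈ stab col, sgnC σ • ofP σ
  set a := ∑ σ ∈ stab row, ofP σ
  have hdecomp : t * τ * (τ * t * τ) = τ := by
    have : t * τ * (τ * t * τ) = t * (τ * τ) * (t * τ) := by group
    rw [this, hττ, mul_one, ← mul_assoc, htt, one_mul]
  have key : b * ofP τ * a = -(b * ofP τ * a) := by
    conv_lhs => rw [← hdecomp, ← ofP_mul, ← ofP_mul]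
    calc b * (ofP t * ofP τ * ofP (τ * t * τ)) * a
        = (b * ofP t) * ofP τ * (ofP (τ * t * τ) * a) := by noncomm_ring
      _ = (sgnC t • b) * ofP τ * a := by rw [symB_mul htc, mul_symA hs]
      _ = -(b * ofP τ * a) := by rw [hts]; simp [smul_mul_assoc]
  have h2 : (2 : ℂ) • (b * ofP τ * a) = 0 := by
    rw [two_smul]
    nth_rewrite 1 [key]
    exact neg_add_cancel _
  simpa using smul_eq_zero.mp h2

/-- For a "mixed" transposition the sandwich vanishes. -/
lemma sandwich_mixed {f : ℕ → ℕ} {row col : Fin N → ℕ} (ht : IsTableau f row col)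
    {x y : Fin N} (hr : row x ≠ row y) (hc : col x ≠ col y) :
    (∑ σ ∈ stab col, sgnC σ • ofP σ) * ofP (Equiv.swap x y) * (∑ σ ∈ stab row, ofP σ) = 0 := by
  set τ := Equiv.swap x y with hτ
  have hττ : τ * τ = 1 := Equiv.swap_mul_self x y
  by_cases hcase : col y < f (row x)
  · obtain ⟨z, hz1, hz2⟩ := (ht.2 (row x) (col y)).2 hcase
    have hzx : z ≠ x := fun h => hc (by rw [← h, hz2])
    have hzy : z ≠ y := fun h => hr (by rw [← hz1, h])
    refine sandwich_zero (t := Equiv.swap z y) (swap_mem_stab (hz2)) (sgnC_swap hzy) hττ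
      (Equiv.swap_mul_self z y) ?_
    have hinv : τ⁻¹ = τ := by rw [hτ, Equiv.swap_inv]
    have : τ * Equiv.swap z y * τ = Equiv.swap (τ z) (τ y) := by
      rw [Equiv.swap_apply_apply, hinv]
    rw [this, Equiv.swap_apply_of_ne_of_ne hzx hzy, Equiv.swap_apply_right]
    exact swap_mem_stab (by rw [hz1])
  · have hx1 : col x < f (row x) := (ht.2 (row x) (col x)).1 ⟨x, rfl, rfl⟩
    have hy1 : col y < f (row y) := (ht.2 (row y) (col y)).1 ⟨y, rfl, rfl⟩
    have hcase2 : col x < f (row y) :=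
      (lt_of_lt_of_le hx1 (le_of_not_gt hcase)).trans hy1
    obtain ⟨z, hz1, hz2⟩ := (ht.2 (row y) (col x)).2 hcase2
    have hzy : z ≠ y := fun h => hc (by rw [← h, hz2])
    have hzx : z ≠ x := fun h => hr (by rw [← hz1, h])
    refine sandwich_zero (t := Equiv.swap z x) (swap_mem_stab (hz2)) (sgnC_swap hzx) hττ
      (Equiv.swap_mul_self z x) ?_
    have hinv : τ⁻¹ = τ := by rw [hτ, Equiv.swap_inv]
    have : τ * Equiv.swap z x * τ = Equiv.swap (τ z) (τ x) := by
      rw [Equiv.swap_apply_apply, hinv]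
    rw [this, Equiv.swap_apply_of_ne_of_ne hzx hzy, Equiv.swap_apply_left]
    exact swap_mem_stab (by rw [hz1])

/-! ### Counting lemmas -/

/-- 2 × (number of increasing pairs in F × F) = |F|² - |F|. -/
lemma two_mul_card_lt {α : Type*} [Fintype α] [LinearOrder α] (F : Finset α) :
    2 * ((F ×ˢ F).filter fun p => p.1 < p.2).card = F.card * F.card - F.card := by
  have hswap : ((F ×ˢ F).filter fun p => p.1 < p.2).card
      = ((F ×ˢ F).filter fun p => p.2 < p.1).card := by
    apply Finset.card_nbij' (fun p => p.swap) (fun p => p.swap)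
    · intro p hp; simp only [Finset.mem_coe, Finset.mem_filter, Finset.mem_product, Prod.fst_swap, Prod.snd_swap] at *; tauto
    · intro p hp; simp only [Finset.mem_coe, Finset.mem_filter, Finset.mem_product, Prod.fst_swap, Prod.snd_swap] at *; tauto
    · intro p _; simp
    · intro p _; simp
  have hunion : ((F ×ˢ F).filter fun p => p.1 < p.2) ∪ ((F ×ˢ F).filter fun p => p.2 < p.1)
      = F.offDiag := by
    ext p
    simp only [Finset.mem_union, Finset.mem_filter, Finset.mem_product, Finset.mem_offDiag]
    constructor
    · rintro (⟨⟨h1, h2⟩, h3⟩ | ⟨⟨h1, h2⟩, h3⟩)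
      · exact ⟨h1, h2, h3.ne⟩
      · exact ⟨h1, h2, h3.ne'⟩
    · rintro ⟨h1, h2, h3⟩
      rcases lt_or_gt_of_ne h3 with h | h
      · exact Or.inl ⟨⟨h1, h2⟩, h⟩
      · exact Or.inr ⟨⟨h1, h2⟩, h⟩
  have hdisj : Disjoint ((F ×ˢ F).filter fun p => p.1 < p.2)
      ((F ×ˢ F).filter fun p => p.2 < p.1) := by
    rw [Finset.disjoint_left]
    intro p hp hq
    simp only [Finset.mem_filter] at hp hq
    exact absurd hq.2 (not_lt_of_gt hp.2)
  have := Finset.card_union_of_disjoint hdisj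
  rw [hunion, Finset.offDiag_card] at this
  omega

lemma swap_injective_pairs {a b c d : Fin N} (hab : a < b) (hcd : c < d)
    (h : Equiv.swap a b = Equiv.swap c d) : a = c ∧ b = d := by
  have h1 : Equiv.swap c d a = b := by rw [← h, Equiv.swap_apply_left]
  rcases eq_or_ne a c with rfl | hac
  · rw [Equiv.swap_apply_left] at h1; exact ⟨rfl, h1.symm⟩
  rcases eq_or_ne a d with rfl | had
  · rw [Equiv.swap_apply_right] at h1
    exact absurd (hcd.trans (hab.trans_eq h1.symm)) (lt_irrefl _)
  · rw [Equiv.swap_apply_of_ne_of_ne hac had] at h1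
    exact absurd (hab.trans_eq h1.symm) (lt_irrefl _)

/-- Transpositions preserving the fibers of `h` biject with increasing pairs in a fiber. -/
lemma card_trans_stab (h : Fin N → ℕ) :
    ((transpositions N).filter (· ∈ stab h)).card
      = ((Finset.univ ×ˢ Finset.univ : Finset (Fin N × Fin N)).filter
          fun p => (p.1 < p.2 ∧ h p.1 = h p.2)).card := by
  symm
  apply Finset.card_bij (fun p _ => Equiv.swap p.1 p.2)
  · intro p hp
    simp only [Finset.mem_filter, Finset.mem_product] at hp
    obtain ⟨-, hlt, hh⟩ := hp
    simp only [Finset.mem_filter, transpositions, Finset.mem_univ, true_and]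
    exact ⟨⟨p.1, p.2, hlt.ne, rfl⟩, swap_mem_stab hh⟩
  · intro p hp q hq heq
    simp only [Finset.mem_filter, Finset.mem_product] at hp hq
    obtain ⟨h1, h2⟩ := swap_injective_pairs hp.2.1 hq.2.1 heq
    exact Prod.ext h1 h2
  · intro σ hσ
    simp only [Finset.mem_filter, transpositions, Finset.mem_univ, true_and] at hσ
    obtain ⟨⟨u, v, huv, rfl⟩, hst⟩ := hσ
    have hh : h u = h v := by
      have h0 := (mem_stab.1 hst) u
      rw [Equiv.swap_apply_left] at h0
      exact h0.symm
    rcases lt_or_gt_of_ne huv with hlt | hgt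
    · exact ⟨(u, v), by simp [hlt, hh], rfl⟩
    · exact ⟨(v, u), by simp [hgt, hh.symm], (Equiv.swap_comm u v).symm⟩

/-- Fiberwise count of transpositions in a stabilizer. -/
lemma two_mul_card_trans_stab (h : Fin N → ℕ) (hv : ∀ x, h x < N) :
    2 * ((transpositions N).filter (· ∈ stab h)).card
      = ∑ r ∈ Finset.range N,
          ((Finset.univ.filter fun x => h x = r).card * (Finset.univ.filter fun x => h x = r).card
            - (Finset.univ.filter fun x => h x = r).card) := by
  rw [card_trans_stab]
  rw [Finset.card_eq_sum_card_fiberwise (f := fun p => h p.1) (t := Finset.range N)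
    (fun p _ => Finset.mem_range.2 (hv p.1))]
  rw [Finset.mul_sum]
  refine Finset.sum_congr rfl fun r _ => ?_
  rw [← two_mul_card_lt (Finset.univ.filter fun x => h x = r)]
  have heq : ((Finset.univ ×ˢ Finset.univ : Finset (Fin N × Fin N)).filter
        fun p => (p.1 < p.2 ∧ h p.1 = h p.2)).filter (fun p => h p.1 = r)
      = ((Finset.univ.filter fun x => h x = r) ×ˢ (Finset.univ.filter fun x => h x = r)).filter
          fun p => p.1 < p.2 := by
    ext p
    simp only [Finset.mem_filter, Finset.mem_product, Finset.mem_univ, true_and]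
    constructor
    · rintro ⟨⟨hlt, hh⟩, hr⟩
      exact ⟨⟨hr, hh ▸ hr⟩, hlt⟩
    · rintro ⟨⟨h1, h2⟩, hlt⟩
      exact ⟨⟨hlt, h1.trans h2.symm⟩, h1⟩
  rw [heq]
  congr!

variable {f : ℕ → ℕ} {row col : Fin N → ℕ}

lemma card_fiber_row (ht : IsTableau f row col) (r : ℕ) :
    (Finset.univ.filter fun x => row x = r).card = f r := by
  rw [← Finset.card_range (f r)]
  apply Finset.card_bij (fun x _ => col x)
  · intro x hx
    simp only [Finset.mem_filter, Finset.mem_univ, true_and] at hx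
    exact Finset.mem_range.2 (hx ▸ (ht.2 (row x) (col x)).1 ⟨x, rfl, rfl⟩)
  · intro x hx y hy hxy
    simp only [Finset.mem_filter, Finset.mem_univ, true_and] at hx hy
    exact ht.1 (show (row x, col x) = (row y, col y) from by rw [hx, hy, hxy])
  · intro c hc
    obtain ⟨x, hx1, hx2⟩ := (ht.2 r c).2 (Finset.mem_range.1 hc)
    exact ⟨x, by simp [hx1], hx2⟩

lemma card_fiber_col (ht : IsTableau f row col) (hN : ∀ i, N ≤ i → f i = 0) (c : ℕ) :
    (Finset.univ.filter fun x => col x = c).card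
      = ((Finset.range N).filter fun r => c < f r).card := by
  apply Finset.card_bij (fun x _ => row x)
  · intro x hx
    simp only [Finset.mem_filter, Finset.mem_univ, true_and] at hx
    have hlt : c < f (row x) := hx ▸ (ht.2 (row x) (col x)).1 ⟨x, rfl, rfl⟩
    have : row x < N := by
      by_contra hge
      rw [hN (row x) (le_of_not_gt hge)] at hlt; omega
    simp [Finset.mem_filter, Finset.mem_range, this, hlt]
  · intro x hx y hy hxy
    simp only [Finset.mem_filter, Finset.mem_univ, true_and] at hx hy
    exact ht.1 (show (row x, col x) = (row y, col y) from by rw [hx, hy, hxy])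
  · intro r hr
    simp only [Finset.mem_filter, Finset.mem_range] at hr
    obtain ⟨x, hx1, hx2⟩ := (ht.2 r c).2 hr.2
    exact ⟨x, by simp [hx2], hx1⟩

lemma initseg (hA : Antitone f) (c : ℕ) :
    (Finset.range N).filter (fun r => c < f r)
      = Finset.range (((Finset.range N).filter (fun r => c < f r)).card) := by
  set S := (Finset.range N).filter (fun r => c < f r) with hS
  ext k
  simp only [Finset.mem_range]
  constructor
  · intro hk
    have hsub : Finset.range (k + 1) ⊆ S := by
      intro j hj
      rw [Finset.mem_range] at hj
      have hjk : j ≤ k := by omega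
      simp only [hS, Finset.mem_filter, Finset.mem_range] at hk ⊢
      exact ⟨by omega, lt_of_lt_of_le hk.2 (hA hjk)⟩
    have := Finset.card_le_card hsub
    rw [Finset.card_range] at this
    omega
  · intro hk
    by_contra hkS
    have hsub : S ⊆ Finset.range k := by
      intro j hj
      rw [Finset.mem_range]
      by_contra hjk
      have hjk' : k ≤ j := by omega
      simp only [hS, Finset.mem_filter, Finset.mem_range] at hj hkS
      exact hkS ⟨by omega, lt_of_lt_of_le hj.2 (hA hjk')⟩
    have := Finset.card_le_card hsub
    rw [Finset.card_range] at this
    omega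

lemma sum_range_int (k : ℕ) : 2 * (∑ s ∈ Finset.range k, (s : ℤ)) = k * (k - 1) := by
  induction k with
  | zero => simp
  | succ n ih =>
    rw [Finset.sum_range_succ, mul_add, ih]
    push_cast
    ring

lemma cast_sq_sub (m : ℕ) : ((m * m - m : ℕ) : ℤ) = (m : ℤ) * m - m := by
  rcases Nat.eq_zero_or_pos m with rfl | hm
  · simp
  · rw [Nat.cast_sub (Nat.le_mul_of_pos_left m hm)]
    push_cast; ring

lemma f_le (hf : IsPartitionN f N) (r : ℕ) : f r ≤ N := by
  rcases Nat.eq_zero_or_pos N with rfl | hN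
  · rw [hf.2.1 r (Nat.zero_le r)]
  · calc f r ≤ f 0 := hf.1 (Nat.zero_le r)
      _ ≤ ∑ i ∈ Finset.range N, f i :=
        Finset.single_le_sum (fun i _ => Nat.zero_le (f i)) (Finset.mem_range.2 hN)
      _ = N := hf.2.2

lemma content_identity (hf : IsPartitionN f N) :
    2 * ∑ r ∈ Finset.range N, ∑ s ∈ Finset.range (f r), ((s : ℤ) - (r : ℤ))
      = (∑ r ∈ Finset.range N, ((f r : ℤ) * (f r) - (f r)))
        - ∑ c ∈ Finset.range N,
            ((((Finset.range N).filter (fun r => c < f r)).card : ℤ)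
              * (((Finset.range N).filter (fun r => c < f r)).card : ℤ)
              - (((Finset.range N).filter (fun r => c < f r)).card : ℤ)) := by
  have key : 2 * ∑ r ∈ Finset.range N, (r : ℤ) * (f r : ℤ)
      = ∑ c ∈ Finset.range N,
          ((((Finset.range N).filter (fun r => c < f r)).card : ℤ)
            * (((Finset.range N).filter (fun r => c < f r)).card : ℤ)
            - (((Finset.range N).filter (fun r => c < f r)).card : ℤ)) := by
    have step1 : ∀ r ∈ Finset.range N, (r : ℤ) * (f r : ℤ)
        = ∑ c ∈ Finset.range N, (if c < f r then (r : ℤ) else 0) := by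
      intro r _
      rw [← Finset.sum_filter]
      have hfil : (Finset.range N).filter (fun c => c < f r) = Finset.range (f r) := by
        ext c
        simp only [Finset.mem_filter, Finset.mem_range]
        constructor
        · exact fun h => h.2
        · exact fun h => ⟨lt_of_lt_of_le h (f_le hf r), h⟩
      rw [hfil, Finset.sum_const, Finset.card_range, nsmul_eq_mul]
      ring
    rw [Finset.sum_congr rfl step1, Finset.sum_comm]
    have step2 : ∀ c ∈ Finset.range N,
        (∑ r ∈ Finset.range N, if c < f r then (r : ℤ) else 0)
          = ∑ r ∈ Finset.range (((Finset.range N).filter (fun r => c < f r)).card), (r : ℤ) := by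
      intro c _
      rw [← Finset.sum_filter, ← initseg hf.1 c]
    rw [Finset.sum_congr rfl step2, Finset.mul_sum]
    refine Finset.sum_congr rfl fun c _ => ?_
    rw [sum_range_int]
    ring
  have sumrow : ∀ r ∈ Finset.range N,
      (∑ s ∈ Finset.range (f r), ((s : ℤ) - (r : ℤ)))
        = (∑ s ∈ Finset.range (f r), (s : ℤ)) - (f r : ℤ) * (r : ℤ) := by
    intro r _
    rw [Finset.sum_sub_distrib, Finset.sum_const, Finset.card_range, nsmul_eq_mul]
  rw [Finset.sum_congr rfl sumrow]
  rw [mul_comm (2 : ℤ), Finset.sum_mul]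
  have expand : ∀ r ∈ Finset.range N,
      ((∑ s ∈ Finset.range (f r), (s : ℤ)) - (f r : ℤ) * (r : ℤ)) * 2
        = ((f r : ℤ) * (f r) - (f r)) - 2 * ((r : ℤ) * (f r : ℤ)) := by
    intro r _
    have := sum_range_int (f r)
    nlinarith [this]
  rw [Finset.sum_congr rfl expand, Finset.sum_sub_distrib, ← Finset.mul_sum, key]

end Aux

/-- the sum of all transpositions `Σ_{(a,b) ∈ S_N} (a,b)` acts on the Specht
module `S^f` (for `f ⊢ N`) as multiplication by the scalar
`C(f) = Σ_{(r,s) ∈ f} (s − r)` (the contents being independent of 0/1-indexing). -/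
theorem stmt8 (N : ℕ) (f : ℕ → ℕ) (hf : IsPartitionN f N)
    (row col : Fin N → ℕ) (ht : IsTableau f row col)
    (x : GA N) (hx : x ∈ SpechtIdeal row col) :
    (∑ σ ∈ transpositions N, ofP σ) * x =
      (((∑ r ∈ Finset.range N, ∑ s ∈ Finset.range (f r), ((s : ℤ) - (r : ℤ))) : ℤ) : ℂ) • x := by
  classical
  set T := ∑ σ ∈ transpositions N, ofP σ with hT
  set b := ∑ σ ∈ stab col, sgnC σ • ofP σ with hb
  set a := ∑ σ ∈ stab row, ofP σ with ha
  have hys : youngSym row col = b * a := rfl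
  obtain ⟨y, hy⟩ := Submodule.mem_span_singleton.1 hx
  rw [hys, smul_eq_mul] at hy
  have hvrow : ∀ z : Fin N, row z < N := by
    intro z
    have hlt : col z < f (row z) := (ht.2 _ _).1 ⟨z, rfl, rfl⟩
    by_contra hge
    rw [hf.2.1 (row z) (le_of_not_gt hge)] at hlt
    omega
  have hvcol : ∀ z : Fin N, col z < N := fun z =>
    lt_of_lt_of_le ((ht.2 _ _).1 ⟨z, rfl, rfl⟩) (f_le hf (row z))
  -- the value of each sandwiched transposition
  have hval : ∀ τ ∈ transpositions N, b * ofP τ * a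
      = ((if τ ∈ stab row then (1 : ℂ) else 0) - (if τ ∈ stab col then (1 : ℂ) else 0))
          • (b * a) := by
    intro τ hτ
    obtain ⟨u, v, huv, rfl⟩ := mem_transpositions.1 hτ
    by_cases hrw : Equiv.swap u v ∈ stab row
    · have hru : row u = row v := by
        have h0 := (mem_stab.1 hrw) u
        rw [Equiv.swap_apply_left] at h0
        exact h0.symm
      have hcl : Equiv.swap u v ∉ stab col := by
        intro hcl
        have h0 := (mem_stab.1 hcl) u
        rw [Equiv.swap_apply_left] at h0
        exact huv (ht.1 (show (row u, col u) = (row v, col v) from by rw [hru, h0]))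
      rw [if_pos hrw, if_neg hcl, sub_zero, one_smul, mul_assoc, mul_symA hrw]
    · by_cases hcl : Equiv.swap u v ∈ stab col
      · rw [if_neg hrw, if_pos hcl, zero_sub, symB_mul hcl, sgnC_swap huv]
        rw [smul_mul_assoc, neg_smul, one_smul]
      · have hru : row u ≠ row v := fun h => hrw (swap_mem_stab h)
        have hcu : col u ≠ col v := fun h => hcl (swap_mem_stab h)
        rw [if_neg hrw, if_neg hcl, sub_zero, zero_smul]
        exact sandwich_mixed ht hru hcu
  -- action of T on the Young symmetrizer
  have hTe : T * (b * a)
      = ((((transpositions N).filter (· ∈ stab row)).card : ℂ)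
          - (((transpositions N).filter (· ∈ stab col)).card : ℂ)) • (b * a) := by
    calc T * (b * a) = (T * b) * a := (mul_assoc _ _ _).symm
      _ = (b * T) * a := by rw [T_central b]
      _ = ∑ τ ∈ transpositions N, b * ofP τ * a := by
          rw [hT, Finset.mul_sum (transpositions N) (fun τ => ofP τ) b,
            Finset.sum_mul (transpositions N) (fun τ => b * ofP τ) a]
      _ = ∑ τ ∈ transpositions N,
            ((if τ ∈ stab row then (1 : ℂ) else 0) - (if τ ∈ stab col then (1 : ℂ) else 0))
              • (b * a) := Finset.sum_congr rfl hval
      _ = (∑ τ ∈ transpositions N,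
            ((if τ ∈ stab row then (1 : ℂ) else 0) - (if τ ∈ stab col then (1 : ℂ) else 0)))
              • (b * a) := (Finset.sum_smul).symm
      _ = _ := by
          rw [Finset.sum_sub_distrib, Finset.sum_boole, Finset.sum_boole]
  -- the integer identity
  have hint : (((transpositions N).filter (· ∈ stab row)).card : ℤ)
      - (((transpositions N).filter (· ∈ stab col)).card : ℤ)
      = ∑ r ∈ Finset.range N, ∑ s ∈ Finset.range (f r), ((s : ℤ) - (r : ℤ)) := by
    have hR := two_mul_card_trans_stab row hvrow
    have hC := two_mul_card_trans_stab col hvcol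
    have hRz : 2 * (((transpositions N).filter (· ∈ stab row)).card : ℤ)
        = ∑ r ∈ Finset.range N, ((f r : ℤ) * (f r) - (f r)) := by
      have := congrArg (fun n : ℕ => (n : ℤ)) hR
      push_cast [Nat.cast_sum] at this
      rw [this]
      refine Finset.sum_congr rfl fun r _ => ?_
      rw [← cast_sq_sub, card_fiber_row ht r]
    have hCz : 2 * (((transpositions N).filter (· ∈ stab col)).card : ℤ)
        = ∑ c ∈ Finset.range N,
            ((((Finset.range N).filter (fun r => c < f r)).card : ℤ)
              * (((Finset.range N).filter (fun r => c < f r)).card : ℤ)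
              - (((Finset.range N).filter (fun r => c < f r)).card : ℤ)) := by
      have := congrArg (fun n : ℕ => (n : ℤ)) hC
      push_cast [Nat.cast_sum] at this
      rw [this]
      refine Finset.sum_congr rfl fun c _ => ?_
      rw [← cast_sq_sub, card_fiber_col ht hf.2.1 c]
    have hCI := content_identity hf
    linarith
  -- conclude
  have hcoef : ((((transpositions N).filter (· ∈ stab row)).card : ℂ)
      - (((transpositions N).filter (· ∈ stab col)).card : ℂ))
      = (((∑ r ∈ Finset.range N, ∑ s ∈ Finset.range (f r), ((s : ℤ) - (r : ℤ))) : ℤ) : ℂ) := by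
    rw [← hint]
    push_cast
    ring
  rw [← hy]
  calc T * (y * (b * a)) = (T * y) * (b * a) := (mul_assoc _ _ _).symm
    _ = (y * T) * (b * a) := by rw [T_central y]
    _ = y * (T * (b * a)) := mul_assoc _ _ _
    _ = y * (((((transpositions N).filter (· ∈ stab row)).card : ℂ)
          - (((transpositions N).filter (· ∈ stab col)).card : ℂ)) • (b * a)) := by rw [hTe]
    _ = _ := by rw [hcoef, mul_smul_comm]
end
end

section
/- Let T ∈ 𝕋_{n,k} be a non-increasing plane rooted n-ary tree with k internal nodes, and let S be obtained from T by choosing internal nodes a (parent) and b (child of a) with μ_T(a) > μ_T(b), and exchanging all subtrees rooted at children of a other than b with the subtrees rooted at all but one child x of b. Then the depth vector of S is lexicographically strictly smaller than the depth vector of T. -/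
/-- Plane rooted `n`-ary trees: every internal node has exactly `n` ordered children. -/
inductive NTree (n : ℕ) : Type
  | leaf : NTree n
  | node : (Fin n → NTree n) → NTree n

namespace NTree

/-- The number of internal nodes; `T ∈ 𝕋_{n,k}` means `internals T = k`. -/
def internals {n : ℕ} : NTree n → ℕ
  | leaf => 0
  | node c => 1 + ∑ i, internals (c i)

/-- Boolean test for being a leaf. -/
def isLeafB {n : ℕ} : NTree n → Bool
  | leaf => true
  | node _ => false

/-- `μ_T(a)`: the number of children of an internal node (given by its children function
`c`) that are leaves. -/
def muNode {n : ℕ} (c : Fin n → NTree n) : ℕ :=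
  (Finset.univ.filter (fun i => isLeafB (c i) = true)).card

/-- The number of leaves of a tree at depth `d`. -/
def leavesAtDepth {n : ℕ} : NTree n → ℕ → ℕ
  | leaf => fun d => if d = 0 then 1 else 0
  | node c => fun d =>
      match d with
      | 0 => 0
      | d + 1 => ∑ i, leavesAtDepth (c i) d

/-- Strict lexicographic order on depth vectors (as functions `ℕ → ℕ`, padded with 0). -/
def LexLt (u v : ℕ → ℕ) : Prop :=
  ∃ m, (∀ i, i < m → u i = v i) ∧ u m < v m

/-- The exchange of STATEMENT 16, performed at the root of `t`: `t = node ca` is the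
internal node `a`, its child `b = ca i₀ = node cb` is internal with `μ(b) < μ(a)`, and
`s` is obtained by exchanging all subtrees rooted at the children of `a` other than `b`
with the subtrees rooted at all children of `b` but one (the child `x = cb j₀`). -/
def LocalExchange {n : ℕ} (t s : NTree n) : Prop :=
  ∃ (ca cb cb' : Fin n → NTree n) (i₀ j₀ : Fin n)
    (e : {i : Fin n // i ≠ i₀} ≃ {j : Fin n // j ≠ j₀}),
    t = node ca ∧ ca i₀ = node cb ∧ muNode cb < muNode ca ∧
    (∀ j : Fin n, cb' j = if h : j = j₀ then cb j₀ else ca ((e.symm ⟨j, h⟩) : Fin n)) ∧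
    s = node (fun i => if h : i = i₀ then node cb' else cb ((e ⟨i, h⟩) : Fin n))

/-- The exchange performed at an arbitrary internal node: the congruence closure of
`LocalExchange`. -/
inductive Exchange {n : ℕ} : NTree n → NTree n → Prop
  | base {t s : NTree n} : LocalExchange t s → Exchange t s
  | congr (c : Fin n → NTree n) (i : Fin n) {s' : NTree n} :
      Exchange (c i) s' → Exchange (node c) (node (Function.update c i s'))

lemma l0 {n : ℕ} (X : NTree n) : leavesAtDepth X 0 = if isLeafB X then 1 else 0 := by
  cases X <;> simp [leavesAtDepth, isLeafB]

lemma node_zero {n : ℕ} (c : Fin n → NTree n) : leavesAtDepth (node c) 0 = 0 := by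
  simp [leavesAtDepth]

lemma node_succ {n : ℕ} (c : Fin n → NTree n) (d : ℕ) :
    leavesAtDepth (node c) (d + 1) = ∑ i, leavesAtDepth (c i) d := by
  simp [leavesAtDepth]

lemma sum0 {n : ℕ} (c : Fin n → NTree n) : ∑ i, leavesAtDepth (c i) 0 = muNode c := by
  rw [muNode, Finset.card_eq_sum_ones, Finset.sum_filter]
  exact Finset.sum_congr rfl fun i _ => l0 _

lemma base_lex {n : ℕ} {t s : NTree n} (h : LocalExchange t s) :
    LexLt (leavesAtDepth s) (leavesAtDepth t) := by
  obtain ⟨ca, cb, cb', i₀, j₀, e, ht, hb, hmu, hcb', hs⟩ := h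
  set cs : Fin n → NTree n :=
    fun i => if h : i = i₀ then node cb' else cb ((e ⟨i, h⟩) : Fin n) with hcs
  refine ⟨1, ?_, ?_⟩
  · intro i hi
    interval_cases i
    subst ht; subst hs; rw [node_zero, node_zero]
  · subst ht; subst hs
    rw [node_succ, node_succ, sum0, sum0]
    refine lt_of_le_of_lt ?_ hmu
    unfold muNode
    refine Finset.card_le_card_of_injOn
      (fun i => if h : i = i₀ then j₀ else ((e ⟨i, h⟩) : Fin n)) ?_ ?_
    · intro i hi
      simp only [Finset.mem_filter, Finset.mem_univ, true_and] at hi ⊢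
      have hne : i ≠ i₀ := by
        intro hh
        rw [hcs] at hi
        simp only [hh, dif_pos] at hi
        exact absurd hi (by simp [isLeafB])
      rw [dif_neg hne]
      rw [hcs] at hi
      simpa only [dif_neg hne, Finset.mem_coe, Finset.mem_filter, Finset.mem_univ, true_and] using hi
    · intro i hi i' hi' hf
      simp only [Finset.mem_coe, Finset.mem_filter, Finset.mem_univ, true_and] at hi hi'
      have hne : i ≠ i₀ := by
        intro hh
        rw [hcs] at hi
        simp only [hh, dif_pos] at hi
        exact absurd hi (by simp [isLeafB])
      have hne' : i' ≠ i₀ := by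
        intro hh
        rw [hcs] at hi'
        simp only [hh, dif_pos] at hi'
        exact absurd hi' (by simp [isLeafB])
      simp only [dif_neg hne, dif_neg hne'] at hf
      have : e ⟨i, hne⟩ = e ⟨i', hne'⟩ := Subtype.ext hf
      have := e.injective this
      exact congrArg Subtype.val this

lemma exchange_lex {n : ℕ} {t s : NTree n} (h : Exchange t s) :
    LexLt (leavesAtDepth s) (leavesAtDepth t) := by
  induction h with
  | base h => exact base_lex h
  | @congr c i s' h ih =>
    obtain ⟨m, heq, hlt⟩ := ih
    refine ⟨m + 1, ?_, ?_⟩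
    · intro d hd
      match d with
      | 0 => rw [node_zero, node_zero]
      | d + 1 =>
        rw [node_succ, node_succ]
        refine Finset.sum_congr rfl fun j _ => ?_
        by_cases hj : j = i
        · subst hj
          rw [Function.update_self]
          exact heq d (by omega)
        · rw [Function.update_of_ne hj]
    · rw [node_succ, node_succ]
      have h1 : ∀ (f : Fin n → NTree n),
          ∑ j, leavesAtDepth (f j) m
            = leavesAtDepth (f i) m + ∑ j ∈ Finset.univ.erase i, leavesAtDepth (f j) m :=
        fun f => (Finset.add_sum_erase _ _ (Finset.mem_univ i)).symm
      rw [h1, h1]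
      have h2 : ∑ j ∈ Finset.univ.erase i, leavesAtDepth (Function.update c i s' j) m
          = ∑ j ∈ Finset.univ.erase i, leavesAtDepth (c j) m := by
        refine Finset.sum_congr rfl fun j hj => ?_
        rw [Function.update_of_ne (Finset.ne_of_mem_erase hj)]
      rw [h2, Function.update_self]
      exact Nat.add_lt_add_right hlt _

end NTree

/-- let `T ∈ 𝕋_{n,k}` and let `S` be obtained from `T` by choosing internal
nodes `a` (parent) and `b` (child of `a`) with `μ_T(a) > μ_T(b)` and exchanging all
subtrees rooted at children of `a` other than `b` with the subtrees rooted at all but one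
child `x` of `b`.  Then the depth vector of `S` is lexicographically strictly smaller
than the depth vector of `T`. -/
theorem stmt16 (n k : ℕ) (T S : NTree n) (hT : T.internals = k)
    (h : NTree.Exchange T S) :
    NTree.LexLt (NTree.leavesAtDepth S) (NTree.leavesAtDepth T) := by
  exact NTree.exchange_lex h
end
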